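/- Let K_η : ℝ → ℝ be defined via Fourier transforms by F[K_η](t) = F[K](t)/F[η](t/λ), where the kernel K satisfies supp F[K] ⊂ [−S,S] and sup_t |F[K](t)| ≤ K₁, and η satisfies |F[η](t)| ≥ c|t|^{−β} for |t| ≥ T and F[η] nonvanishing and continuous. Then there is a constant C > 0 such that for all 0 < λ ≤ 1, sup_s (1/λ²)|F[K_η(·/λ)](s)|² ≤ C λ^{−2β}. -/

import Mathlib

open scoped FourierTransform
open Real MeasureTheory

lemma fourier_comp_div (f : ℝ → ℂ) (lam : ℝ) (hlam : 0 < lam) (s : ℝ) :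
    𝓕 (fun x => f (x / lam)) s = lam • 𝓕 f (lam * s) := by
  rw [Real.fourier_real_eq, Real.fourier_real_eq]
  have h : ∀ x : ℝ, (𝐞 (-(x * s)) • f (x / lam) : ℂ)
      = (fun y => (𝐞 (-(y * (lam * s))) • f y : ℂ)) (x / lam) := by
    intro x
    have : x / lam * (lam * s) = x * s := by field_simp
    simp [this]
  simp_rw [h]
  rw [MeasureTheory.Measure.integral_comp_div (fun y => (𝐞 (-(y * (lam * s))) • f y : ℂ)) lam,
    abs_of_pos hlam]

/-- Core Fourier bound of Lemma `lip`: the rescaled deconvolution kernel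
`K_η(·/λ)`, defined through `F[K_η](t) = F[K](t)/F[η](t/λ)`, satisfies
`sup_s (1/λ²)|F[K_η(·/λ)](s)|² ≤ C λ^{−2β}`. -/
theorem deconvolution_kernel_fourier_bound
    (Kker η : ℝ → ℂ) (S K₁ c T β : ℝ)
    (hS : 0 < S) (hK₁ : 0 < K₁) (hc : 0 < c) (hT : 0 < T) (hβ : 0 < β)
    (hsupp : ∀ t : ℝ, S < |t| → 𝓕 Kker t = 0)
    (hKbound : ∀ t : ℝ, ‖𝓕 Kker t‖ ≤ K₁)
    (hη_lower : ∀ t : ℝ, T ≤ |t| → c * |t| ^ (-β) ≤ ‖𝓕 η t‖)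
    (hη_ne : ∀ t : ℝ, 𝓕 η t ≠ 0)
    (hη_cont : Continuous fun t => 𝓕 η t) :
    ∃ C > 0, ∀ lam : ℝ, 0 < lam → lam ≤ 1 →
      ∀ Kη : ℝ → ℂ, (∀ t : ℝ, 𝓕 Kη t = 𝓕 Kker t / 𝓕 η (t / lam)) →
        ∀ s : ℝ, (1 / lam ^ 2) * ‖𝓕 (fun x => Kη (x / lam)) s‖ ^ 2 ≤
          C * lam ^ (-(2 * β)) := by
  -- minimum of ‖𝓕 η‖ on [-T, T]
  obtain ⟨t₀, ht₀, hmin'⟩ := (isCompact_Icc (a := -T) (b := T)).exists_isMinOn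
    ⟨0, by constructor <;> linarith⟩ (hη_cont.norm.continuousOn)
  have hmin : ∀ x ∈ Set.Icc (-T) T, ‖𝓕 η t₀‖ ≤ ‖𝓕 η x‖ := fun x hx => hmin' hx
  set m : ℝ := ‖𝓕 η t₀‖ with hm
  have hm0 : 0 < m := norm_pos_iff.mpr (hη_ne t₀)
  set m₀ : ℝ := min (c * S ^ (-β)) m with hm₀def
  have hm₀ : 0 < m₀ := lt_min (mul_pos hc (Real.rpow_pos_of_pos hS _)) hm0
  refine ⟨(K₁ / m₀) ^ 2, by positivity, ?_⟩
  intro lam hlam hlam1 Kη hKη s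
  rw [fourier_comp_div Kη lam hlam s]
  have hlamβ : 0 < lam ^ β := Real.rpow_pos_of_pos hlam _
  have hnorm : ‖lam • 𝓕 Kη (lam * s)‖ = lam * ‖𝓕 Kη (lam * s)‖ := by
    rw [norm_smul, Real.norm_eq_abs, abs_of_pos hlam]
  rw [hnorm, mul_pow, ← mul_assoc]
  have : 1 / lam ^ 2 * lam ^ 2 = 1 := by field_simp
  rw [this, one_mul, hKη]
  have hdiv : (lam * s) / lam = s := by field_simp
  rw [hdiv]
  rcases le_or_gt |lam * s| S with hcase | hcase
  · -- main case: bound the quotient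
    have hηs : m₀ * lam ^ β ≤ ‖𝓕 η s‖ := by
      rcases le_or_gt |s| T with hsT | hsT
      · have hs_mem : s ∈ Set.Icc (-T) T := abs_le.mp hsT |> fun h => ⟨h.1, h.2⟩
        have := hmin s hs_mem
        have h1 : lam ^ β ≤ 1 := Real.rpow_le_one (le_of_lt hlam) hlam1 (le_of_lt hβ)
        calc m₀ * lam ^ β ≤ m * 1 := by
              apply mul_le_mul (min_le_right _ _) h1 (le_of_lt hlamβ) (le_of_lt hm0)
          _ = m := mul_one m
          _ ≤ ‖𝓕 η s‖ := this
      · have hTs : T ≤ |s| := le_of_lt hsT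
        have hslam : |s| ≤ S / lam := by
          rw [le_div_iff₀ hlam, mul_comm]
          calc lam * |s| = |lam * s| := by rw [abs_mul, abs_of_pos hlam]
            _ ≤ S := hcase
        have hspos : 0 < |s| := lt_of_lt_of_le hT hTs
        have key : (S / lam) ^ (-β) ≤ |s| ^ (-β) :=
          Real.rpow_le_rpow_of_nonpos hspos hslam (by linarith)
        have heq : (S / lam) ^ (-β) = S ^ (-β) * lam ^ β := by
          rw [Real.div_rpow (le_of_lt hS) (le_of_lt hlam), Real.rpow_neg (le_of_lt hlam),
            div_eq_mul_inv, inv_inv]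
        calc m₀ * lam ^ β ≤ (c * S ^ (-β)) * lam ^ β := by
              apply mul_le_mul_of_nonneg_right (min_le_left _ _) (le_of_lt hlamβ)
          _ = c * ((S / lam) ^ (-β)) := by rw [heq]; ring
          _ ≤ c * |s| ^ (-β) := by
              apply mul_le_mul_of_nonneg_left key (le_of_lt hc)
          _ ≤ ‖𝓕 η s‖ := hη_lower s hTs
    have hq : ‖𝓕 Kker (lam * s) / 𝓕 η s‖ ≤ K₁ / (m₀ * lam ^ β) := by
      rw [norm_div]
      apply div_le_div₀ hK₁.le (hKbound _) (mul_pos hm₀ hlamβ) hηs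
    have hq2 : ‖𝓕 Kker (lam * s) / 𝓕 η s‖ ^ 2 ≤ (K₁ / (m₀ * lam ^ β)) ^ 2 := by
      apply pow_le_pow_left₀ (norm_nonneg _) hq
    refine hq2.trans (le_of_eq ?_)
    rw [div_pow, mul_pow, div_pow]
    rw [show lam ^ (-(2 * β)) = ((lam ^ β) ^ 2)⁻¹ by
      rw [← Real.rpow_natCast (lam ^ β) 2, ← Real.rpow_mul hlam.le,
        ← Real.rpow_neg hlam.le]
      norm_num [mul_comm]]
    field_simp
  · -- support vanishing case
    rw [hsupp _ hcase, zero_div, norm_zero]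
    have : (0:ℝ) ^ 2 = 0 := by norm_num
    rw [this]
    positivity
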